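/- For finite metric spaces X ⊂ X' with uniform probability measures, d_GPr(X, X') ≤ 1 - |X|/|X'|; consequently for any function F from metric measure spaces to a metric space satisfying d(F(M),F(M')) ≤ n·d_GPr(M,M'), the invariant F is uniformly robust with robustness coefficient r and estimate bound nr/(1+r) for every r > 0: whenever |X'|/|X| < 1+r, one has d(F(X),F(X')) < nr/(1+r). -/

import Mathlib

open MeasureTheory
open scoped ENNReal

/-- The uniform probability measure on a finite type. -/
noncomputable def uniformMeasure (X : Type) [Fintype X] [MeasurableSpace X] : Measure X :=
  (Fintype.card X : ℝ≥0∞)⁻¹ • Measure.count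

lemma aux_ennreal (k j m N : ℕ) (hm : 0 < m) (hN : 0 < N) (hkm : k ≤ m) (hmN : m ≤ N)
    (hkj : k ≤ j) (hjk : j ≤ k + (N - m)) :
    (m : ℝ≥0∞)⁻¹ * k ≤ (N : ℝ≥0∞)⁻¹ * j + ((N - m : ℕ) : ℝ≥0∞) / N ∧
    (N : ℝ≥0∞)⁻¹ * j ≤ (m : ℝ≥0∞)⁻¹ * k + ((N - m : ℕ) : ℝ≥0∞) / N := by
  have hjN : j ≤ N := by omega
  have hm' : (m : ℝ) > 0 := by exact_mod_cast hm
  have hN' : (N : ℝ) > 0 := by exact_mod_cast hN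
  have hfin1 : (N : ℝ≥0∞)⁻¹ * j + ((N - m : ℕ) : ℝ≥0∞) / N ≠ ⊤ := by
    refine ENNReal.add_ne_top.2 ⟨?_, ?_⟩
    · exact ENNReal.mul_ne_top (by simp [hN.ne']) (by simp)
    · exact (ENNReal.div_lt_top (by simp) (by simp [hN.ne'])).ne
  have hfin2 : (m : ℝ≥0∞)⁻¹ * k + ((N - m : ℕ) : ℝ≥0∞) / N ≠ ⊤ := by
    refine ENNReal.add_ne_top.2 ⟨?_, ?_⟩
    · exact ENNReal.mul_ne_top (by simp [hm.ne']) (by simp)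
    · exact (ENNReal.div_lt_top (by simp) (by simp [hN.ne'])).ne
  have hfin3 : (m : ℝ≥0∞)⁻¹ * k ≠ ⊤ := ENNReal.mul_ne_top (by simp [hm.ne']) (by simp)
  have hfin4 : (N : ℝ≥0∞)⁻¹ * j ≠ ⊤ := ENNReal.mul_ne_top (by simp [hN.ne']) (by simp)
  constructor
  · rw [← ENNReal.toReal_le_toReal hfin3 hfin1]
    rw [ENNReal.toReal_add (by exact ENNReal.mul_ne_top (by simp [hN.ne']) (by simp))
      ((ENNReal.div_lt_top (by simp) (by simp [hN.ne'])).ne)]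
    simp only [ENNReal.toReal_mul, ENNReal.toReal_inv, ENNReal.toReal_natCast,
      ENNReal.toReal_div]
    rw [inv_mul_eq_div, inv_mul_eq_div, ← add_div, div_le_div_iff₀ hm' hN']
    have : ((N - m : ℕ) : ℝ) = (N : ℝ) - m := by
      push_cast [Nat.cast_sub hmN]; ring
    rw [this]
    have hkj' : (k : ℝ) ≤ j := by exact_mod_cast hkj
    have hkm' : (k : ℝ) ≤ m := by exact_mod_cast hkm
    have hmN' : (m : ℝ) ≤ N := by exact_mod_cast hmN
    nlinarith [mul_nonneg (sub_nonneg.2 hkm') (sub_nonneg.2 hmN')]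
  · rw [← ENNReal.toReal_le_toReal hfin4 hfin2]
    rw [ENNReal.toReal_add (by exact ENNReal.mul_ne_top (by simp [hm.ne']) (by simp))
      ((ENNReal.div_lt_top (by simp) (by simp [hN.ne'])).ne)]
    simp only [ENNReal.toReal_mul, ENNReal.toReal_inv, ENNReal.toReal_natCast,
      ENNReal.toReal_div]
    rw [inv_mul_eq_div, inv_mul_eq_div, div_add_div _ _ hm'.ne' hN'.ne', div_le_div_iff₀ hN' (by positivity)]
    have hsub : ((N - m : ℕ) : ℝ) = (N : ℝ) - m := by
      push_cast [Nat.cast_sub hmN]; ring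
    rw [hsub]
    have hjk' : (j : ℝ) ≤ k + ((N : ℝ) - m) := by
      have := hjk; rw [← Nat.cast_le (α := ℝ)] at this
      push_cast [Nat.cast_sub hmN] at this; linarith
    have hkm' : (k : ℝ) ≤ m := by exact_mod_cast hkm
    have hmN' : (m : ℝ) ≤ N := by exact_mod_cast hmN
    have hk0 : (0:ℝ) ≤ k := by positivity
    nlinarith [mul_le_mul_of_nonneg_right (mul_le_mul_of_nonneg_right hjk' hm'.le) hN'.le,
      mul_nonneg (mul_nonneg hk0 (sub_nonneg.2 hmN')) hN'.le]

/-- for finite metric spaces `X ⊆ X'` with uniform probability measures,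
`d_GPr(X,X') ≤ 1 - |X|/|X'|` (the bound is witnessed by an embedding into a common
metric space); consequently any invariant `F` of metric measure spaces taking values in
a metric space and satisfying `d(F(M),F(M')) ≤ n · d_GPr(M,M')` (expressed below by
the hypothesis that `d(F(X),F(X'))` is at most `n` times the embedded Prohorov
distance for every isometric embedding into a common space) is uniformly robust with
robustness coefficient `r` and estimate bound `nr/(1+r)`: if `|X'|/|X| < 1+r` then
`d(F(X),F(X')) < nr/(1+r)`. -/
theorem uniform_robustness {X' B : Type} [MetricSpace X'] [Fintype X'] [Nonempty X']
    [MeasurableSpace X'] [BorelSpace X'] [MetricSpace B]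
    (s : Finset X') (hs : s.Nonempty)
    (n : ℕ) (hn : 0 < n) (r : ℝ) (hr : 0 < r)
    (b b' : B)
    (hF : ∀ (Z : Type) (_ : MetricSpace Z) (_ : MeasurableSpace Z) (_ : BorelSpace Z)
        (φ : {x // x ∈ s} → Z) (ψ : X' → Z),
        Isometry φ → Isometry ψ → Measurable φ → Measurable ψ →
        dist b b' ≤ (n : ℝ) *
          levyProkhorovDist (Measure.map φ (uniformMeasure {x // x ∈ s}))
            (Measure.map ψ (uniformMeasure X')))
    (hcard : (Fintype.card X' : ℝ) < (1 + r) * s.card) :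
    (∃ (Z : Type) (_ : MetricSpace Z) (_ : MeasurableSpace Z) (_ : BorelSpace Z)
      (φ : {x // x ∈ s} → Z) (ψ : X' → Z),
        Isometry φ ∧ Isometry ψ ∧ Measurable φ ∧ Measurable ψ ∧
        levyProkhorovDist (Measure.map φ (uniformMeasure {x // x ∈ s}))
            (Measure.map ψ (uniformMeasure X')) ≤
          1 - (s.card : ℝ) / Fintype.card X') ∧
    dist b b' < (n : ℝ) * r / (1 + r) := by
  classical
  set m := s.card with hm_def
  set N := Fintype.card X' with hN_def
  have hm : 0 < m := Finset.card_pos.2 hs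
  have hN : 0 < N := Fintype.card_pos
  have hmN : m ≤ N := s.card_le_univ
  have hm' : (0:ℝ) < m := by exact_mod_cast hm
  have hN' : (0:ℝ) < N := by exact_mod_cast hN
  set δ : ℝ≥0∞ := ((N - m : ℕ) : ℝ≥0∞) / N with hδ_def
  have hδ_ne_top : δ ≠ ⊤ := (ENNReal.div_lt_top (by simp) (by simp [hN.ne'])).ne
  set μ := Measure.map (Subtype.val : {x // x ∈ s} → X') (uniformMeasure {x // x ∈ s}) with hμ_def
  set ν := Measure.map (id : X' → X') (uniformMeasure X') with hν_def
  have hνid : ν = uniformMeasure X' := Measure.map_id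
  have hisoφ : Isometry (Subtype.val : {x // x ∈ s} → X') := Isometry.of_dist_eq fun _ _ => rfl
  have key : ∀ C : Set X', MeasurableSet C → μ C ≤ ν C + δ ∧ ν C ≤ μ C + δ := by
    intro C hC
    set k := (s.filter (· ∈ C)).card with hk_def
    set j := (Finset.univ.filter (· ∈ C)).card with hj_def
    have hpre : (Subtype.val ⁻¹' C : Set {x // x ∈ s}) =
        ↑(s.attach.filter fun x => ↑x ∈ C) := by
      ext x; simp
    have hμC : μ C = (m : ℝ≥0∞)⁻¹ * k := by
      rw [hμ_def, Measure.map_apply measurable_subtype_coe hC]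
      rw [uniformMeasure, Measure.smul_apply, smul_eq_mul, Fintype.card_coe]
      congr 1
      rw [hpre, Measure.count_apply_finset'
        (by rw [← hpre]; exact measurable_subtype_coe hC)]
      have hcardeq : (s.attach.filter fun x => ↑x ∈ C).card = k := by
        rw [hk_def]
        refine Finset.card_bij (fun x _ => ↑x) ?_ ?_ ?_
        · intro a ha
          simp only [Finset.mem_filter, Finset.mem_attach, true_and] at ha
          exact Finset.mem_filter.2 ⟨a.2, ha⟩
        · intro a _ b _ h
          exact Subtype.ext h
        · intro c hc
          simp only [Finset.mem_filter] at hc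
          exact ⟨⟨c, hc.1⟩, by simp [hc.2], rfl⟩
      rw [hcardeq]
    have hCeq : C = ↑(Finset.univ.filter (· ∈ C)) := by ext x; simp
    have hνC : ν C = (N : ℝ≥0∞)⁻¹ * j := by
      rw [hνid, uniformMeasure, Measure.smul_apply, smul_eq_mul]
      congr 1
      rw [hCeq, Measure.count_apply_finset'
        (by rw [← hCeq]; exact hC)]
    have hkm : k ≤ m := Finset.card_filter_le _ _
    have hkj : k ≤ j :=
      Finset.card_le_card (Finset.filter_subset_filter _ (Finset.subset_univ s))
    have hjk : j ≤ k + (N - m) := by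
      have hsubset : Finset.univ.filter (· ∈ C) ⊆ s.filter (· ∈ C) ∪ sᶜ := by
        intro x hx
        simp only [Finset.mem_filter, Finset.mem_univ, true_and] at hx
        by_cases hxs : x ∈ s
        · exact Finset.mem_union_left _ (Finset.mem_filter.2 ⟨hxs, hx⟩)
        · exact Finset.mem_union_right _ (Finset.mem_compl.2 hxs)
      calc j ≤ (s.filter (· ∈ C) ∪ sᶜ).card := Finset.card_le_card hsubset
        _ ≤ k + sᶜ.card := Finset.card_union_le _ _
        _ = k + (N - m) := by rw [Finset.card_compl]
    obtain ⟨h1, h2⟩ := aux_ennreal k j m N hm hN hkm hmN hkj hjk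
    rw [hμC, hνC]
    exact ⟨h1, h2⟩
  have hedist : levyProkhorovEDist μ ν ≤ δ := by
    apply levyProkhorovEDist_le_of_forall μ ν δ
    intro ε C hδε hεtop hC
    have hε0 : (0:ℝ≥0∞) < ε := lt_of_le_of_lt (zero_le : (0:ℝ≥0∞) ≤ δ) hδε
    have hεr : 0 < ε.toReal := ENNReal.toReal_pos hε0.ne' hεtop.ne
    have hsub : C ⊆ Metric.thickening ε.toReal C := Metric.self_subset_thickening hεr C
    obtain ⟨h1, h2⟩ := key C hC
    exact ⟨h1.trans (add_le_add (measure_mono hsub) hδε.le),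
      h2.trans (add_le_add (measure_mono hsub) hδε.le)⟩
  have hδreal : δ.toReal = 1 - (m:ℝ)/N := by
    rw [hδ_def, ENNReal.toReal_div]
    simp only [ENNReal.toReal_natCast]
    rw [Nat.cast_sub hmN]
    field_simp
  have hlp : levyProkhorovDist μ ν ≤ 1 - (m:ℝ)/N := by
    rw [← hδreal]
    exact ENNReal.toReal_mono hδ_ne_top hedist
  have hfrac : 1 - (m:ℝ)/N < r / (1 + r) := by
    have h1r : (0:ℝ) < 1 + r := by linarith
    have h2 : (1:ℝ)/(1+r) < (m:ℝ)/N := by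
      rw [div_lt_div_iff₀ h1r hN']
      nlinarith
    have h3 : r/(1+r) = 1 - 1/(1+r) := by field_simp; ring
    rw [h3]
    linarith
  refine ⟨⟨X', inferInstance, inferInstance, inferInstance, Subtype.val, id,
    hisoφ, isometry_id, measurable_subtype_coe, measurable_id, hlp⟩, ?_⟩
  have hd := hF X' inferInstance inferInstance inferInstance Subtype.val id
    hisoφ isometry_id measurable_subtype_coe measurable_id
  have hn' : (0:ℝ) < n := by exact_mod_cast hn
  calc dist b b' ≤ (n:ℝ) * levyProkhorovDist μ ν := hd
    _ ≤ (n:ℝ) * (1 - (m:ℝ)/N) := by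
        exact mul_le_mul_of_nonneg_left hlp hn'.le
    _ < (n:ℝ) * (r/(1+r)) := by
        exact mul_lt_mul_of_pos_left hfrac hn'
    _ = (n:ℝ) * r / (1+r) := by ring
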